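/- Let φ be an entire function of exponential type, let α ∈ ℂ, and let f be an entire function of exponential type. Then φ(D)f = e_α · φ_α(D)(f·e_{−α}), where φ_α(z) := φ(z+α); explicitly, for all z ∈ ℂ, ∑_{n≥0} (φ^{(n)}(0)/n!) f^{(n)}(z) = e^{αz} · ∑_{n≥0} (φ^{(n)}(α)/n!) (f·e_{−α})^{(n)}(z). -/

import Mathlib

open Filter Complex Set

/-- `log` with the convention `log 0 = -∞`, valued in the extended reals. -/
noncomputable def elog (x : ℝ) : EReal :=
  if x = 0 then (⊥ : EReal) else ((Real.log x : ℝ) : EReal)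

/-- Maximum modulus `M_f(r) = max_{|z|=r} |f z|`. -/
noncomputable def maxMod (f : ℂ → ℂ) (r : ℝ) : ℝ :=
  sSup ((fun z => ‖f z‖) '' Metric.sphere (0 : ℂ) r)

/-- The exponential type `τ(f) = limsup_{r→∞} log M_f(r) / r` (valued in `EReal`,
with the convention `log 0 = -∞`; note `log (M_f(r)^{1/r}) = log M_f(r) / r` for `r > 0`). -/
noncomputable def expType (f : ℂ → ℂ) : EReal :=
  Filter.limsup (fun r : ℝ => elog (maxMod f r ^ (1 / r))) Filter.atTop

/-- The indicator function `h_f(θ) = limsup_{r→∞} log |f (r e^{iθ})| / r`. -/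
noncomputable def indicatorFn (f : ℂ → ℂ) (θ : ℝ) : EReal :=
  Filter.limsup
    (fun r : ℝ => elog (‖f ((r : ℂ) * Complex.exp ((θ : ℂ) * Complex.I))‖ ^ (1 / r)))
    Filter.atTop

/-- Support function `H_K(z) = sup {Re (z u) : u ∈ K}`. -/
noncomputable def suppFn (K : Set ℂ) (z : ℂ) : ℝ :=
  sSup ((fun u => (z * u).re) '' K)

/-- The differential operator `φ(D) f = ∑ (φ^{(n)}(0)/n!) f^{(n)}`. -/
noncomputable def phiD (φ : ℂ → ℂ) (f : ℂ → ℂ) : ℂ → ℂ :=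
  fun z => ∑' n : ℕ, (iteratedDeriv n φ 0 / (Nat.factorial n : ℂ)) * iteratedDeriv n f z

/-- The norm `‖f‖_{K,n} = sup_z |f z| e^{-H_K(z) - |z|/n}`. -/
noncomputable def expNorm (K : Set ℂ) (n : ℕ) (f : ℂ → ℂ) : ℝ :=
  sSup (Set.range fun z : ℂ => ‖f z‖ * Real.exp (-suppFn K z - ‖z‖ / (n : ℝ)))

/-- Membership in `Exp(K)`: entire and `‖f‖_{K,n} < ∞` for all `n ≥ 1`. -/
def memExp (K : Set ℂ) (f : ℂ → ℂ) : Prop :=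
  Differentiable ℂ f ∧ ∀ n : ℕ, 1 ≤ n →
    BddAbove (Set.range fun z : ℂ =>
      ‖f z‖ * Real.exp (-suppFn K z - ‖z‖ / (n : ℝ)))

/-- Lower density of a set of natural numbers. -/
noncomputable def lowerDensity (A : Set ℕ) : ℝ :=
  Filter.liminf (fun N : ℕ => ((A ∩ Set.Iic N).ncard : ℝ) / (N : ℝ)) Filter.atTop

/-- `f` is hypercyclic for `φ(D)` on `H(ℂ)`. -/
def HC (φ f : ℂ → ℂ) : Prop :=
  ∀ g : ℂ → ℂ, Differentiable ℂ g → ∀ L : Set ℂ, IsCompact L → ∀ ε : ℝ, 0 < ε →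
    ∃ m : ℕ, ∀ z ∈ L, ‖(phiD φ)^[m] f z - g z‖ < ε

/-- `f` is frequently hypercyclic for `φ(D)` on `H(ℂ)`. -/
def FHC (φ f : ℂ → ℂ) : Prop :=
  ∀ g : ℂ → ℂ, Differentiable ℂ g → ∀ L : Set ℂ, IsCompact L → ∀ ε : ℝ, 0 < ε →
    0 < lowerDensity {m : ℕ | ∀ z ∈ L, ‖(phiD φ)^[m] f z - g z‖ < ε}

/-- `f` is hypercyclic for `φ(D)` on `Exp(K)`. -/
def HCExp (K : Set ℂ) (φ f : ℂ → ℂ) : Prop :=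
  memExp K f ∧ ∀ g : ℂ → ℂ, memExp K g → ∀ n : ℕ, 1 ≤ n → ∀ ε : ℝ, 0 < ε →
    ∃ m : ℕ, expNorm K n (fun z => (phiD φ)^[m] f z - g z) < ε

/-- `f` is frequently hypercyclic for `φ(D)` on `Exp(K)`. -/
def FHCExp (K : Set ℂ) (φ f : ℂ → ℂ) : Prop :=
  memExp K f ∧ ∀ g : ℂ → ℂ, memExp K g → ∀ n : ℕ, 1 ≤ n → ∀ ε : ℝ, 0 < ε →
    0 < lowerDensity {m : ℕ | expNorm K n (fun z => (phiD φ)^[m] f z - g z) < ε}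

/-- The Borel transform `Bf(z) = ∑ f^{(n)}(0) z^{-(n+1)}`. -/
noncomputable def borelT (f : ℂ → ℂ) : ℂ → ℂ :=
  fun z => ∑' n : ℕ, iteratedDeriv n f 0 / z ^ (n + 1)

/-- The transform `Φ_φ f (z) = ∑ (φ(D)^n f)(0) z^n / n!`. -/
noncomputable def PhiT (φ f : ℂ → ℂ) : ℂ → ℂ :=
  fun z => ∑' n : ℕ, ((phiD φ)^[n] f 0) * z ^ n / (Nat.factorial n : ℂ)

section AuxStmt15

open Filter Complex Set Finset
open scoped NNReal


lemma iterIter (f : ℂ → ℂ) (m k : ℕ) :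
    iteratedDeriv m (iteratedDeriv k f) = iteratedDeriv (m + k) f := by
  induction m with
  | zero => simp
  | succ m ih =>
    rw [iteratedDeriv_succ, ih, ← iteratedDeriv_succ, Nat.succ_add]

lemma derivEntire {f : ℂ → ℂ} (hf : Differentiable ℂ f) : Differentiable ℂ (deriv f) :=
  ((contDiff_infty_iff_deriv.mp (hf.contDiff)).2).differentiable (by simp)

lemma diffIter {f : ℂ → ℂ} (hf : Differentiable ℂ f) (k : ℕ) :
    Differentiable ℂ (iteratedDeriv k f) := by
  induction k with
  | zero => simpa using hf
  | succ k ih => rw [iteratedDeriv_succ]; exact derivEntire ih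

lemma hasDerivAtCexp (c z : ℂ) : HasDerivAt (fun w => Complex.exp (c * w)) (c * Complex.exp (c * z)) z := by
  simpa [mul_comm] using (((hasDerivAt_id z).const_mul c).cexp)

lemma iterCexp (c : ℂ) (n : ℕ) :
    iteratedDeriv n (fun w => Complex.exp (c * w)) = fun z => c ^ n * Complex.exp (c * z) := by
  induction n with
  | zero => simp
  | succ n ih =>
    rw [iteratedDeriv_succ, ih]
    funext z
    rw [deriv_const_mul _ (hasDerivAtCexp c z).differentiableAt, (hasDerivAtCexp c z).deriv]
    ring

lemma leibniz {f g : ℂ → ℂ} (hf : Differentiable ℂ f) (hg : Differentiable ℂ g) (n : ℕ) :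
    iteratedDeriv n (fun w => f w * g w) = fun z =>
      ∑ ij ∈ Finset.HasAntidiagonal.antidiagonal n,
        (n.choose ij.1 : ℂ) * (iteratedDeriv ij.1 f z * iteratedDeriv ij.2 g z) := by
  induction n with
  | zero => simp
  | succ n ih =>
    rw [iteratedDeriv_succ, ih]
    funext z
    rw [deriv_fun_sum (fun ij _ => (((diffIter hf ij.1).mul (diffIter hg ij.2)).const_mul
      ((n.choose ij.1 : ℂ))).differentiableAt)]
    rw [Finset.sum_antidiagonal_choose_succ_mul
      (fun i j => iteratedDeriv i f z * iteratedDeriv j g z) n]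
    rw [← Finset.sum_add_distrib]
    refine Finset.sum_congr rfl fun ij hij => ?_
    rw [deriv_const_mul _ ((diffIter hf ij.1 z).fun_mul (diffIter hg ij.2 z)),
      deriv_fun_mul (diffIter hf ij.1).differentiableAt (diffIter hg ij.2).differentiableAt,
      ← iteratedDeriv_succ, ← iteratedDeriv_succ]
    have : (n.choose ij.2 : ℂ) = (n.choose ij.1 : ℂ) := by
      have h := (Finset.HasAntidiagonal.mem_antidiagonal.mp hij)
      rw [Nat.choose_symm_of_eq_add h.symm]
    rw [this]
    ring

lemma absLeMaxMod {h : ℂ → ℂ} (hc : Continuous h) (z : ℂ) :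
    ‖h z‖ ≤ maxMod h (‖z‖) := by
  apply le_csSup
  · exact ((isCompact_sphere 0 _).image (continuous_norm.comp hc)).bddAbove
  · exact ⟨z, by simp, rfl⟩

lemma growth {h : ℂ → ℂ} (hd : Differentiable ℂ h) (ht : expType h < ⊤) :
    ∃ C τ : ℝ, 0 ≤ C ∧ 0 ≤ τ ∧ ∀ z, ‖h z‖ ≤ C * Real.exp (τ * ‖z‖) := by
  obtain ⟨b0, hb0, -⟩ := EReal.exists_between_coe_real ht
  set b : ℝ := max b0 0 with hbdef
  have hb : expType h < (b : EReal) :=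
    lt_of_lt_of_le hb0 (by exact_mod_cast le_max_left _ _)
  have hbnn : (0:ℝ) ≤ b := le_max_right _ _
  have h1 : ∀ᶠ r in atTop, elog (maxMod h r ^ (1 / r)) < (b : EReal) :=
    Filter.eventually_lt_of_limsup_lt hb
  obtain ⟨R₀, hR₀⟩ := (Filter.eventually_atTop).mp h1
  set R₁ : ℝ := max R₀ 1 with hR₁def
  have key : ∀ r : ℝ, R₁ ≤ r → maxMod h r ≤ Real.exp (b * r) := by
    intro r hr
    have hr1 : (1:ℝ) ≤ r := le_trans (le_max_right _ _) hr
    have hM0 : 0 ≤ maxMod h r := Real.sSup_nonneg (by rintro x ⟨w, -, rfl⟩; positivity)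
    rcases eq_or_lt_of_le hM0 with hM | hM
    · rw [← hM]; positivity
    · have e := hR₀ r (le_trans (le_max_left _ _) hr)
      have hx : (0:ℝ) < maxMod h r ^ (1 / r) := Real.rpow_pos_of_pos hM _
      rw [elog, if_neg (ne_of_gt hx)] at e
      have e2 : Real.log (maxMod h r ^ (1 / r)) < b := by exact_mod_cast e
      rw [Real.log_rpow hM] at e2
      have e3 : Real.log (maxMod h r) < b * r := by
        have hrpos : (0:ℝ) < r := lt_of_lt_of_le one_pos hr1
        calc Real.log (maxMod h r) = r * (1 / r * Real.log (maxMod h r)) := by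
              field_simp
          _ < r * b := by
              apply mul_lt_mul_of_pos_left _ hrpos
              exact e2
          _ = b * r := mul_comm _ _
      calc maxMod h r = Real.exp (Real.log (maxMod h r)) := (Real.exp_log hM).symm
        _ ≤ Real.exp (b * r) := Real.exp_le_exp.mpr e3.le
  obtain ⟨C₀, hC₀⟩ := ((isCompact_closedBall (0:ℂ) R₁).image
    (continuous_norm.comp hd.continuous)).bddAbove
  refine ⟨max C₀ 1, b, le_trans zero_le_one (le_max_right _ _), hbnn, fun z => ?_⟩
  have hexp1 : (1:ℝ) ≤ Real.exp (b * ‖z‖) := by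
    rw [← Real.exp_zero]; exact Real.exp_le_exp.mpr (by positivity)
  rcases le_or_gt (‖z‖) R₁ with hz | hz
  · have : ‖h z‖ ≤ C₀ := by
      apply hC₀
      exact ⟨z, by simpa using hz, rfl⟩
    calc ‖h z‖ ≤ C₀ := this
      _ ≤ max C₀ 1 := le_max_left _ _
      _ ≤ max C₀ 1 * Real.exp (b * ‖z‖) := by
          nlinarith [le_trans zero_le_one (le_max_right C₀ 1)]
  · calc ‖h z‖ ≤ maxMod h (‖z‖) := absLeMaxMod hd.continuous z
      _ ≤ Real.exp (b * ‖z‖) := key _ hz.le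
      _ ≤ max C₀ 1 * Real.exp (b * ‖z‖) :=
          le_mul_of_one_le_left (Real.exp_pos _).le (le_max_right _ _)


lemma cauchyBound {h : ℂ → ℂ} (hd : Differentiable ℂ h) {C τ : ℝ}
    (hb : ∀ z, ‖h z‖ ≤ C * Real.exp (τ * ‖z‖)) (hτ : 0 ≤ τ)
    (c : ℂ) (n : ℕ) {R : ℝ} (hR : 0 < R) :
    ‖iteratedDeriv n h c‖ ≤
      (n.factorial : ℝ) * (C * Real.exp (τ * (‖c‖ + R))) / R ^ n := by
  set M : ℝ := C * Real.exp (τ * (‖c‖ + R)) with hM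
  have hC : 0 ≤ C := le_trans (norm_nonneg _) (le_trans (hb 0) (by simp))
  have hMnn : 0 ≤ M := by positivity
  lift R to ℝ≥0 using hR.le with R'
  have hR0 : (0:ℝ≥0) < R' := by exact_mod_cast hR
  have P : HasFPowerSeriesOnBall h (cauchyPowerSeries h c R') c ⊤ :=
    hd.hasFPowerSeriesOnBall c hR0
  set p := cauchyPowerSeries h c R' with hp
  have e1 : iteratedDeriv n h c = iteratedFDeriv ℂ n h c (fun _ => 1) :=
    iteratedDeriv_eq_iteratedFDeriv
  have e2 : n.factorial • (p n fun _ => (1:ℂ)) = iteratedFDeriv ℂ n h c (fun _ => 1) :=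
    P.factorial_smul (1:ℂ) n
  have e3 : ‖iteratedDeriv n h c‖ = (n.factorial : ℝ) * ‖p n fun _ => (1:ℂ)‖ := by
    rw [e1, ← e2, (Nat.cast_smul_eq_nsmul ℂ _ _).symm, smul_eq_mul, norm_mul]
    simp
  have e4 : ‖p n fun _ => (1:ℂ)‖ ≤ ‖p n‖ := by
    have := (p n).le_opNorm (fun _ => (1:ℂ))
    simpa using this
  have e5 : ‖p n‖ ≤ ((2 * Real.pi)⁻¹ * ∫ θ : ℝ in (0)..2 * Real.pi,
      ‖h (circleMap c R' θ)‖) * |(R':ℝ)|⁻¹ ^ n := norm_cauchyPowerSeries_le h c R' n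
  have hint : (∫ θ : ℝ in (0)..2 * Real.pi, ‖h (circleMap c R' θ)‖) ≤ 2 * Real.pi * M := by
    have : (∫ θ : ℝ in (0)..2 * Real.pi, ‖h (circleMap c R' θ)‖) ≤
        ∫ _ : ℝ in (0)..2 * Real.pi, M := by
      apply intervalIntegral.integral_mono_on Real.two_pi_pos.le
      · exact ((hd.continuous.comp (continuous_circleMap c R')).norm).intervalIntegrable _ _
      · exact intervalIntegrable_const
      · intro θ _
        have habs : ‖circleMap c R' θ‖ ≤ ‖c‖ + R' := by
          have h2 : ‖circleMap c R' θ - c‖ = (R' : ℝ) := by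
            rw [circleMap_sub_center, norm_circleMap_zero, _root_.abs_of_nonneg R'.coe_nonneg]
          calc ‖circleMap c R' θ‖
              = ‖c + (circleMap c R' θ - c)‖ := by ring_nf
            _ ≤ ‖c‖ + ‖circleMap c R' θ - c‖ := norm_add_le _ _
            _ = ‖c‖ + R' := by rw [h2]
        calc ‖h (circleMap c R' θ)‖ = ‖h (circleMap c R' θ)‖ := rfl
          _ ≤ C * Real.exp (τ * ‖circleMap c R' θ‖) := hb _
          _ ≤ M := by
              rw [hM]
              apply mul_le_mul_of_nonneg_left _ hC
              exact Real.exp_le_exp.mpr (mul_le_mul_of_nonneg_left habs hτ)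
    rwa [intervalIntegral.integral_const, smul_eq_mul, sub_zero] at this
  calc ‖iteratedDeriv n h c‖ = (n.factorial : ℝ) * ‖p n fun _ => (1:ℂ)‖ := e3
    _ ≤ (n.factorial : ℝ) * (((2 * Real.pi)⁻¹ * ∫ θ : ℝ in (0)..2 * Real.pi,
        ‖h (circleMap c R' θ)‖) * |(R':ℝ)|⁻¹ ^ n) := by
        apply mul_le_mul_of_nonneg_left (le_trans e4 e5) (by positivity)
    _ ≤ (n.factorial : ℝ) * ((2 * Real.pi)⁻¹ * (2 * Real.pi * M) * |(R':ℝ)|⁻¹ ^ n) := by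
        apply mul_le_mul_of_nonneg_left _ (by positivity)
        apply mul_le_mul_of_nonneg_right _ (by positivity)
        apply mul_le_mul_of_nonneg_left hint (by positivity)
    _ = (n.factorial : ℝ) * M / (R':ℝ) ^ n := by
        rw [_root_.abs_of_nonneg R'.coe_nonneg]
        have hRne : (R':ℝ) ≠ 0 := ne_of_gt hR
        field_simp
        rw [mul_assoc, ← mul_pow, one_div_mul_cancel hRne, one_pow, mul_one]

lemma geomBound {h : ℂ → ℂ} (hd : Differentiable ℂ h) {C τ : ℝ} (hC : 0 ≤ C)
    (hb : ∀ z, ‖h z‖ ≤ C * Real.exp (τ * ‖z‖)) (hτ : 0 ≤ τ) (w : ℂ) :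
    ∀ j : ℕ, ‖iteratedDeriv j h w‖ ≤
      (C * Real.exp (τ * ‖w‖)) * ((τ + 1) * Real.exp (τ + 1)) ^ j := by
  intro j
  set B : ℝ := C * Real.exp (τ * ‖w‖) with hB
  set q : ℝ := (τ + 1) * Real.exp (τ + 1) with hq
  rcases Nat.eq_zero_or_pos j with rfl | hj
  · simpa using hb w
  · have hjpos : (0:ℝ) < j := by exact_mod_cast hj
    have hτ1 : (0:ℝ) < τ + 1 := by linarith
    set R : ℝ := (j : ℝ) / (τ + 1) with hR
    have hRpos : 0 < R := by positivity
    have hcb := cauchyBound hd hb hτ w j hRpos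
    refine le_trans hcb ?_
    have hfact : (j.factorial : ℝ) ≤ (j:ℝ)^j := by exact_mod_cast Nat.factorial_le_pow j
    have hexpR : Real.exp (τ * R) ≤ Real.exp ((τ+1) * j) := by
      apply Real.exp_le_exp.mpr
      rw [hR, mul_div_assoc']
      rw [div_le_iff₀ hτ1]
      nlinarith [sq_nonneg τ, mul_nonneg (mul_nonneg hτ hjpos.le) hτ, mul_nonneg hjpos.le hτ]
    have hkey : (j.factorial : ℝ) * Real.exp (τ * R) ≤ (q * R) ^ j := by
      have hqR : q * R = (j:ℝ) * Real.exp (τ + 1) := by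
        rw [hq, hR]; field_simp
      rw [hqR, mul_pow, ← Real.exp_nat_mul]
      apply mul_le_mul hfact _ (Real.exp_pos _).le (by positivity)
      calc Real.exp (τ * R) ≤ Real.exp ((τ+1)*j) := hexpR
        _ = Real.exp ((j:ℝ) * (τ+1)) := by rw [mul_comm]
    calc (j.factorial : ℝ) * (C * Real.exp (τ * (‖w‖ + R))) / R ^ j
        = B * ((j.factorial : ℝ) * Real.exp (τ * R) / R ^ j) := by
          rw [hB, mul_add τ, Real.exp_add]; ring
      _ ≤ B * q ^ j := by
          apply mul_le_mul_of_nonneg_left _ (by positivity)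
          rw [div_le_iff₀ (by positivity)]
          calc (j.factorial : ℝ) * Real.exp (τ * R) ≤ (q * R) ^ j := hkey
            _ = q ^ j * R ^ j := mul_pow _ _ _

noncomputable def Tfun (φ f : ℂ → ℂ) (α z : ℂ) : ℕ × ℕ → ℂ := fun p =>
  (iteratedDeriv p.1 f z / (p.1.factorial : ℂ)) *
    ((p.2.factorial : ℂ)⁻¹ * iteratedDeriv p.2 (iteratedDeriv p.1 φ) α * (0 - α) ^ p.2)

noncomputable def Ufun (φ f : ℂ → ℂ) (α z : ℂ) : ℕ × ℕ → ℂ := fun p =>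
  if p.2 ≤ p.1 then
    (iteratedDeriv p.1 φ α / (p.1.factorial : ℂ)) *
      ((p.1.choose p.2 : ℂ) * (iteratedDeriv p.2 f z * (-α) ^ (p.1 - p.2)))
  else 0


end AuxStmt15

/-- `φ(D) f = e_α ⋅ φ_α(D)(f e_{-α})` where `φ_α = φ(· + α)`. -/
theorem stmt_15 (φ : ℂ → ℂ) (hφ : Differentiable ℂ φ) (hφτ : expType φ < ⊤)
    (α : ℂ) (f : ℂ → ℂ) (hf : Differentiable ℂ f) (hfτ : expType f < ⊤) :
    ∀ z : ℂ, phiD φ f z =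
      Complex.exp (α * z) *
        phiD (fun w => φ (w + α)) (fun w => f w * Complex.exp (-α * w)) z := by
  intro z
  obtain ⟨C, τ, hC, hτ, hgrow⟩ := growth hφ hφτ
  obtain ⟨Cf, τf, hCf, hτf, hgrowf⟩ := growth hf hfτ
  obtain ⟨q, hqdef⟩ : ∃ q : ℝ, q = (τ + 1) * Real.exp (τ + 1) := ⟨_, rfl⟩
  have hqpos : 0 < q := by rw [hqdef]; positivity
  obtain ⟨r, hrdef⟩ : ∃ r : ℝ, r = 2 * q := ⟨_, rfl⟩
  have hrpos : 0 < r := by rw [hrdef]; positivity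
  obtain ⟨F, hFdef⟩ : ∃ F : ℝ, F = Cf * Real.exp (τf * (‖z‖ + r)) := ⟨_, rfl⟩
  have hFnn : 0 ≤ F := by rw [hFdef]; positivity
  obtain ⟨Bα, hBαdef⟩ : ∃ B : ℝ, B = C * Real.exp (τ * ‖α‖) := ⟨_, rfl⟩
  have hBαnn : 0 ≤ Bα := by rw [hBαdef]; positivity
  have hfb : ∀ k : ℕ, ‖iteratedDeriv k f z‖ ≤ (k.factorial : ℝ) * F / r ^ k :=
    fun k => hFdef ▸ cauchyBound hf hgrowf hτf z k hrpos
  have hφα : ∀ j : ℕ, ‖iteratedDeriv j φ α‖ ≤ Bα * q ^ j := by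
    rw [hBαdef, hqdef]; exact geomBound hφ hC hgrow hτ α
  set T : ℕ × ℕ → ℂ := Tfun φ f α z with hTdef
  set U : ℕ × ℕ → ℂ := Ufun φ f α z with hUdef
  -- norm bound for T
  have hTle : ∀ p : ℕ × ℕ, ‖T p‖ ≤
      (F * Bα * (1/2) ^ p.1) * ((q * ‖α‖) ^ p.2 / (p.2.factorial : ℝ)) := by
    rintro ⟨k, m⟩
    have hfack : (0:ℝ) < (k.factorial : ℝ) := by exact_mod_cast k.factorial_pos
    have hfacm : (0:ℝ) < (m.factorial : ℝ) := by exact_mod_cast m.factorial_pos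
    have e0 : ‖T (k, m)‖ = (‖iteratedDeriv k f z‖ / (k.factorial : ℝ)) *
        (‖iteratedDeriv (m + k) φ α‖ * ‖α‖ ^ m / (m.factorial : ℝ)) := by
      simp only [hTdef, Tfun, iterIter, norm_mul, norm_div, norm_inv, norm_pow,
        Complex.norm_natCast, zero_sub, norm_neg]
      field_simp
    rw [e0]
    have h1 : ‖iteratedDeriv k f z‖ / (k.factorial : ℝ) ≤ F / r ^ k := by
      rw [div_le_iff₀ hfack, div_mul_eq_mul_div, le_div_iff₀ (by positivity)]
      calc ‖iteratedDeriv k f z‖ * r ^ k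
          ≤ ((k.factorial : ℝ) * F / r ^ k) * r ^ k := by
            apply mul_le_mul_of_nonneg_right (hfb k) (by positivity)
        _ = F * (k.factorial : ℝ) := by field_simp
    have h2 : ‖iteratedDeriv (m + k) φ α‖ * ‖α‖ ^ m / (m.factorial : ℝ)
        ≤ Bα * q ^ (m + k) * ‖α‖ ^ m / (m.factorial : ℝ) := by
      gcongr
      exact hφα (m + k)
    calc (‖iteratedDeriv k f z‖ / (k.factorial : ℝ)) *
        (‖iteratedDeriv (m + k) φ α‖ * ‖α‖ ^ m / (m.factorial : ℝ))
        ≤ (F / r ^ k) * (Bα * q ^ (m + k) * ‖α‖ ^ m / (m.factorial : ℝ)) := by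
          apply mul_le_mul h1 h2 (by positivity) (by positivity)
      _ = (F * Bα * (1/2) ^ k) * ((q * ‖α‖) ^ m / (m.factorial : ℝ)) := by
          have hq0 : q ≠ 0 := ne_of_gt hqpos
          rw [hrdef, pow_add, mul_pow q (‖α‖), mul_pow 2 q]
          field_simp
          have h2k : (2:ℝ) ^ k * (1 / 2) ^ k = 1 := by rw [← mul_pow]; norm_num
          linear_combination (-(F * Bα * ‖α‖ ^ m)) * h2k
  have hsummajor : Summable (fun p : ℕ × ℕ =>
      (F * Bα * (1/2) ^ p.1) * ((q * ‖α‖) ^ p.2 / (p.2.factorial : ℝ))) := by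
    apply Summable.mul_of_nonneg (f := fun k : ℕ => F * Bα * (1/2) ^ k)
      (g := fun m : ℕ => (q * ‖α‖) ^ m / (m.factorial : ℝ))
    · exact (summable_geometric_of_lt_one (by norm_num) (by norm_num)).mul_left _
    · exact Real.summable_pow_div_factorial _
    · intro k; positivity
    · intro m; positivity
  have hTnormsum : Summable fun p => ‖T p‖ :=
    Summable.of_nonneg_of_le (fun p => norm_nonneg _) hTle hsummajor
  have hTsum : Summable T := hTnormsum.of_norm
  -- step 1
  have hinner : ∀ k : ℕ, ∑' m : ℕ, T (k, m) =
      (iteratedDeriv k f z / (k.factorial : ℂ)) * iteratedDeriv k φ 0 := by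
    intro k
    rw [show (fun m => T (k, m)) = fun m => (iteratedDeriv k f z / (k.factorial : ℂ)) *
      (((m.factorial : ℂ))⁻¹ * iteratedDeriv m (iteratedDeriv k φ) α * (0 - α) ^ m) from rfl,
      tsum_mul_left]
    congr 1
    exact taylorSeries_eq_of_entire' (c := α) (z := 0) (diffIter hφ k)
  have step1 : phiD φ f z = ∑' p : ℕ × ℕ, T p := by
    rw [phiD]
    calc (∑' n : ℕ, (iteratedDeriv n φ 0 / (Nat.factorial n : ℂ)) * iteratedDeriv n f z)
        = ∑' k : ℕ, (iteratedDeriv k f z / (k.factorial : ℂ)) * iteratedDeriv k φ 0 :=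
          tsum_congr fun k => by ring
      _ = ∑' k : ℕ, ∑' m : ℕ, T (k, m) := tsum_congr fun k => (hinner k).symm
      _ = ∑' p : ℕ × ℕ, T p := (Summable.tsum_prod hTsum).symm
  -- injection
  set e : ℕ × ℕ → ℕ × ℕ := fun p => (p.1 + p.2, p.1) with hedef
  have he : Function.Injective e := by
    rintro ⟨a, b⟩ ⟨c, d⟩ h
    simp only [hedef, Prod.mk.injEq] at h
    obtain ⟨h1, h2⟩ := h
    exact Prod.ext h2 (by omega)
  have hUe : ∀ p : ℕ × ℕ, U (e p) = T p := by
    rintro ⟨k, m⟩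
    have hkm : k ≤ k + m := Nat.le_add_right _ _
    simp only [hUdef, hedef, Ufun, if_pos hkm, hTdef, Tfun, iterIter]
    have hsub : k + m - k = m := by omega
    rw [hsub]
    have hchn : (k + m).choose k * k.factorial * m.factorial = (k + m).factorial := by
      have h := Nat.choose_mul_factorial_mul_factorial (Nat.le_add_right k m)
      simpa [Nat.add_sub_cancel_left] using h
    have hch : ((k + m).choose k : ℂ) * (k.factorial : ℂ) * (m.factorial : ℂ)
        = ((k + m).factorial : ℂ) := by exact_mod_cast congrArg (Nat.cast (R := ℂ)) hchn
    have hk0 : (k.factorial : ℂ) ≠ 0 := by exact_mod_cast k.factorial_ne_zero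
    have hm0 : (m.factorial : ℂ) ≠ 0 := by exact_mod_cast m.factorial_ne_zero
    have hkm0 : ((k + m).factorial : ℂ) ≠ 0 := by exact_mod_cast (k + m).factorial_ne_zero
    have hmk : m + k = k + m := by omega
    rw [hmk, zero_sub]
    have hchoose : ((k + m).choose k : ℂ)
        = ((k + m).factorial : ℂ) * ((k.factorial : ℂ))⁻¹ * ((m.factorial : ℂ))⁻¹ := by
      rw [← hch]; field_simp
    rw [hchoose]
    field_simp
  have hUrange : ∀ p ∉ Set.range e, U p = 0 := by
    rintro ⟨n, k⟩ hp
    by_cases h : k ≤ n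
    · refine absurd ⟨(k, n - k), ?_⟩ hp
      rw [hedef]
      simp only [Prod.mk.injEq]
      exact ⟨by omega, trivial⟩
    · simp only [hUdef, Ufun, if_neg h]
  have hcomp : U ∘ e = T := funext hUe
  have hUsum : Summable U :=
    (Function.Injective.summable_iff he hUrange).mp (by rw [hcomp]; exact hTsum)
  have hUtsum : ∑' p : ℕ × ℕ, U p = ∑' p : ℕ × ℕ, T p := by
    rw [← Function.Injective.tsum_eq he (Function.support_subset_iff'.mpr hUrange)]
    exact tsum_congr hUe
  -- step 2
  have hge : Differentiable ℂ fun w => Complex.exp (-α * w) :=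
    fun w => (hasDerivAtCexp (-α) w).differentiableAt
  have hgn : ∀ n : ℕ, iteratedDeriv n (fun w => f w * Complex.exp (-α * w)) z =
      ∑ ij ∈ Finset.HasAntidiagonal.antidiagonal n, (n.choose ij.1 : ℂ) *
        (iteratedDeriv ij.1 f z * ((-α) ^ ij.2 * Complex.exp (-α * z))) := by
    intro n
    rw [leibniz hf hge n]
    simp only [iterCexp]
  have hψ : ∀ n : ℕ, iteratedDeriv n (fun w => φ (w + α)) 0 = iteratedDeriv n φ α := by
    intro n
    rw [iteratedDeriv_comp_add_const]
    simp
  have hrow : ∀ n : ℕ, (iteratedDeriv n φ α / (n.factorial : ℂ)) *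
      (∑ ij ∈ Finset.HasAntidiagonal.antidiagonal n, (n.choose ij.1 : ℂ) *
        (iteratedDeriv ij.1 f z * ((-α) ^ ij.2 * Complex.exp (-α * z))))
      = Complex.exp (-α * z) * ∑' k : ℕ, U (n, k) := by
    intro n
    have h1 : ∑' k : ℕ, U (n, k) = ∑ k ∈ Finset.range (n + 1), U (n, k) :=
      tsum_eq_sum (fun k hk => by
        simp only [hUdef, Ufun]
        rw [if_neg (by simp only [Finset.mem_range] at hk; omega)])
    rw [h1, Finset.Nat.sum_antidiagonal_eq_sum_range_succ_mk]
    rw [Finset.mul_sum, Finset.mul_sum]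
    apply Finset.sum_congr rfl
    intro k hk
    have hkn : k ≤ n := by simp only [Finset.mem_range] at hk; omega
    simp only [hUdef, Ufun, if_pos hkn]
    ring
  have step2 : phiD (fun w => φ (w + α)) (fun w => f w * Complex.exp (-α * w)) z
      = Complex.exp (-α * z) * ∑' p : ℕ × ℕ, U p := by
    rw [phiD]
    calc (∑' n : ℕ, (iteratedDeriv n (fun w => φ (w + α)) 0 / (Nat.factorial n : ℂ)) *
          iteratedDeriv n (fun w => f w * Complex.exp (-α * w)) z)
        = ∑' n : ℕ, Complex.exp (-α * z) * ∑' k : ℕ, U (n, k) :=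
          tsum_congr fun n => by rw [hψ n, hgn n, hrow n]
      _ = Complex.exp (-α * z) * ∑' n : ℕ, ∑' k : ℕ, U (n, k) := tsum_mul_left
      _ = Complex.exp (-α * z) * ∑' p : ℕ × ℕ, U p := by rw [Summable.tsum_prod hUsum]
  rw [step1, step2, hUtsum, ← mul_assoc, ← Complex.exp_add]
  have : α * z + -α * z = 0 := by ring
  rw [this, Complex.exp_zero, one_mul]
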